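/- If K is defined on an orthonormal basis e_1,…,e_n by K(e_1,e_1)=λe_1, K(e_1,e_i)=(λ/2)e_i, K(e_i,e_i)=(λ/2)e_1, K(e_i,e_j)=0 for distinct i,j ≥ 2, then the sectional K-curvature is constant and equal to λ²/4 for all 2-planes in V. -/

import Mathlib

open RealInnerProductSpace

/-- For the model tensor `K(e_1,e_1)=λ e_1`, `K(e_1,e_i)=(λ/2) e_i`,
`K(e_i,e_i)=(λ/2) e_1`, `K(e_i,e_j)=0` (`i ≠ j`, `i,j ≥ 2`), the sectional
K-curvature is constant equal to `λ²/4`. -/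
theorem example_tensor_constant_curvature
    {V : Type*} [NormedAddCommGroup V] [InnerProductSpace ℝ V]
    {n : ℕ} (b : OrthonormalBasis (Fin (n + 1)) ℝ V)
    (K : V →ₗ[ℝ] V →ₗ[ℝ] V)
    (hsymm : ∀ X Y : V, K X Y = K Y X)
    (hadj : ∀ X Y Z : V, ⟪K X Y, Z⟫ = ⟪Y, K X Z⟫)
    (l : ℝ)
    (h11 : K (b 0) (b 0) = l • b 0)
    (h1i : ∀ i : Fin (n + 1), i ≠ 0 → K (b 0) (b i) = (l / 2) • b i)
    (hii : ∀ i : Fin (n + 1), i ≠ 0 → K (b i) (b i) = (l / 2) • b 0)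
    (hij : ∀ i j : Fin (n + 1), i ≠ 0 → j ≠ 0 → i ≠ j → K (b i) (b j) = 0) :
    ∀ X Y : V, ‖X‖ = 1 → ‖Y‖ = 1 → ⟪X, Y⟫ = 0 →
      ⟪K X X, K Y Y⟫ - ⟪K X Y, K X Y⟫ = l ^ 2 / 4 := by
  set e : V := b 0 with he
  -- the explicit bilinear model
  set F : V →ₗ[ℝ] V →ₗ[ℝ] V := LinearMap.mk₂ ℝ
    (fun X Y => ((l / 2) * ⟪X, e⟫) • Y + ((l / 2) * ⟪Y, e⟫) • X
      + ((l / 2) * (⟪X, Y⟫ - ⟪X, e⟫ * ⟪Y, e⟫)) • e)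
    (by
      intro X X' Y
      simp only [inner_add_left]
      module)
    (by
      intro c X Y
      simp only [real_inner_smul_left]
      module)
    (by
      intro X Y Y'
      simp only [inner_add_left, inner_add_right]
      module)
    (by
      intro c X Y
      simp only [real_inner_smul_left, real_inner_smul_right]
      module) with hF
  have hbi : ∀ i j : Fin (n + 1), ⟪b i, b j⟫ = if i = j then (1:ℝ) else 0 := by
    intro i j
    rcases b.orthonormal with ⟨h1, h2⟩
    by_cases h : i = j
    · simp [h, real_inner_self_eq_norm_sq, h1 j]
    · simp [h, h2 h]
  have hKF : K = F := by
    apply b.toBasis.ext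
    intro i
    apply b.toBasis.ext
    intro j
    simp only [OrthonormalBasis.coe_toBasis, hF, LinearMap.mk₂_apply]
    by_cases hi : i = 0
    · by_cases hj : j = 0
      · subst hi; subst hj
        rw [h11]
        simp [hbi, he]
        module
      · subst hi
        rw [h1i j hj]
        simp [hbi, he, hj, Ne.symm hj]
    · by_cases hj : j = 0
      · subst hj
        rw [hsymm, h1i i hi]
        simp [hbi, he, hi, Ne.symm hi]
      · by_cases hij' : i = j
        · subst hij'
          rw [hii i hi]
          simp [hbi, he, hi, Ne.symm hi]
        · rw [hij i j hi hj hij']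
          simp [hbi, he, hi, hj, hij', Ne.symm hi, Ne.symm hj]
  intro X Y hX hY hXY
  have hXX : ⟪X, X⟫ = (1:ℝ) := by
    rw [real_inner_self_eq_norm_sq, hX]; norm_num
  have hYY : ⟪Y, Y⟫ = (1:ℝ) := by
    rw [real_inner_self_eq_norm_sq, hY]; norm_num
  have hee : ⟪e, e⟫ = (1:ℝ) := hbi 0 0 ▸ by simp [hbi]
  have hYX : ⟪Y, X⟫ = (0:ℝ) := by rw [real_inner_comm]; exact hXY
  rw [hKF]
  simp only [hF, LinearMap.mk₂_apply]
  simp only [inner_add_left, inner_add_right, real_inner_smul_left,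
    real_inner_smul_right, hXX, hYY, hXY, hYX, hee, real_inner_comm e X,
    real_inner_comm e Y]
  ring
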